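/- For any f : ℝ → ℝ and any r₀, δ ∈ ℝ: r₀ ∈ argmin_{r}[(δ−r)²/2 + f(r)] if and only if s_f(r₀) ≤ δ ≤ i_f(r₀), where s_f(r₀) = sup_{r < r₀} [(f(r)−f(r₀))/(r−r₀) + (r+r₀)/2] and i_f(r₀) = inf_{r > r₀} [(f(r)−f(r₀))/(r−r₀) + (r+r₀)/2]. -/
import Mathlib


/-- Chord slope function `s_f(r₀) = sup_{r < r₀} [(f r − f r₀)/(r − r₀) + (r + r₀)/2]`,
valued in `EReal`. -/
noncomputable def sChord (f : ℝ → ℝ) (r₀ : ℝ) : EReal :=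
  ⨆ r : {r : ℝ // r < r₀}, (((f r - f r₀) / ((r : ℝ) - r₀) + ((r : ℝ) + r₀) / 2 : ℝ) : EReal)

/-- Chord slope function `i_f(r₀) = inf_{r > r₀} [(f r − f r₀)/(r − r₀) + (r + r₀)/2]`,
valued in `EReal`. -/
noncomputable def iChord (f : ℝ → ℝ) (r₀ : ℝ) : EReal :=
  ⨅ r : {r : ℝ // r₀ < r}, (((f r - f r₀) / ((r : ℝ) - r₀) + ((r : ℝ) + r₀) / 2 : ℝ) : EReal)

/-- `r₀ ∈ argmin_r [(δ−r)²/2 + f r]` iff `s_f(r₀) ≤ δ ≤ i_f(r₀)`. -/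
theorem prox_mem_iff_chord (f : ℝ → ℝ) (r₀ δ : ℝ) :
    (∀ r' : ℝ, (δ - r₀) ^ 2 / 2 + f r₀ ≤ (δ - r') ^ 2 / 2 + f r') ↔
      sChord f r₀ ≤ (δ : EReal) ∧ (δ : EReal) ≤ iChord f r₀ := by
  constructor
  · intro h
    constructor
    · rw [sChord, iSup_le_iff]
      rintro ⟨r, hr⟩
      rw [EReal.coe_le_coe_iff]
      have hne : (r : ℝ) - r₀ ≠ 0 := sub_ne_zero_of_ne (ne_of_lt hr)
      have hq : (f r - f r₀) / (r - r₀) * (r - r₀) = f r - f r₀ :=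
        div_mul_cancel₀ _ hne
      have h2 := h r
      nlinarith [h2, hq, hr]
    · rw [iChord, le_iInf_iff]
      rintro ⟨r, hr⟩
      rw [EReal.coe_le_coe_iff]
      have hne : (r : ℝ) - r₀ ≠ 0 := sub_ne_zero_of_ne (ne_of_gt hr)
      have hq : (f r - f r₀) / (r - r₀) * (r - r₀) = f r - f r₀ :=
        div_mul_cancel₀ _ hne
      have h2 := h r
      nlinarith [h2, hq, hr]
  · rintro ⟨hs, hi⟩ r'
    rcases lt_trichotomy r' r₀ with hr | hr | hr
    · have hle : (((f r' - f r₀) / (r' - r₀) + (r' + r₀) / 2 : ℝ) : EReal) ≤ (δ : EReal) :=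
        le_trans (le_iSup (fun r : {r : ℝ // r < r₀} =>
          (((f r - f r₀) / ((r : ℝ) - r₀) + ((r : ℝ) + r₀) / 2 : ℝ) : EReal)) ⟨r', hr⟩) hs
      rw [EReal.coe_le_coe_iff] at hle
      have hne : r' - r₀ ≠ 0 := by intro hc; linarith
      have hq : (f r' - f r₀) / (r' - r₀) * (r' - r₀) = f r' - f r₀ :=
        div_mul_cancel₀ _ hne
      nlinarith [hle, hq, hr]
    · subst hr; exact le_refl _
    · have hle : (δ : EReal) ≤ (((f r' - f r₀) / (r' - r₀) + (r' + r₀) / 2 : ℝ) : EReal) :=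
        le_trans hi (iInf_le (fun r : {r : ℝ // r₀ < r} =>
          (((f r - f r₀) / ((r : ℝ) - r₀) + ((r : ℝ) + r₀) / 2 : ℝ) : EReal)) ⟨r', hr⟩)
      rw [EReal.coe_le_coe_iff] at hle
      have hne : r' - r₀ ≠ 0 := by intro hc; linarith
      have hq : (f r' - f r₀) / (r' - r₀) * (r' - r₀) = f r' - f r₀ :=
        div_mul_cancel₀ _ hne
      nlinarith [hle, hq, hr]
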